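/- For any real c < 2, any continuously differentiable function y = g(x) defined on a subinterval of (0,1) whose graph satisfies x² + y² − 1 + c(x−1)(y−1) = 0 is a solution of the differential equation y′·(1−x)·(x−y+1) + (1−y)·(y−x+1) = 0. -/

import Mathlib

theorem stmt_1 (c : ℝ) (hc : c < 2) (a b : ℝ)
    (hab : Set.Ioo a b ⊆ Set.Ioo (0 : ℝ) 1)
    (g g' : ℝ → ℝ)
    (hg : ∀ x ∈ Set.Ioo a b, HasDerivAt g (g' x) x)
    (hcont : ContinuousOn g' (Set.Ioo a b))
    (hcurve : ∀ x ∈ Set.Ioo a b,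
      x ^ 2 + (g x) ^ 2 - 1 + c * (x - 1) * (g x - 1) = 0) :
    ∀ x ∈ Set.Ioo a b,
      g' x * (1 - x) * (x - g x + 1) + (1 - g x) * (g x - x + 1) = 0 := by
  intro x hx
  obtain ⟨hx0, hx1⟩ := hab hx
  have hcv := hcurve x hx
  -- derivative of the curve equation is zero
  have hF : HasDerivAt (fun t => t ^ 2 + (g t) ^ 2 - 1 + c * (t - 1) * (g t - 1))
      (2 * x + 2 * g x * g' x + (c * (g x - 1) + c * (x - 1) * g' x)) x := by
    have h1 : HasDerivAt (fun t : ℝ => t ^ 2) (2 * x) x := by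
      simpa using (hasDerivAt_pow 2 x)
    have h2 : HasDerivAt (fun t => (g t) ^ 2) (2 * g x * g' x) x := by
      have := ((hasDerivAt_pow 2 (g x)).comp x (hg x hx))
      simpa [mul_comm, mul_assoc, Function.comp_def] using this
    have h3 : HasDerivAt (fun t => c * (t - 1) * (g t - 1))
        (c * 1 * (g x - 1) + c * (x - 1) * (g' x)) x := by
      have ha : HasDerivAt (fun t : ℝ => c * (t - 1)) (c * 1) x := by
        exact ((hasDerivAt_id x).sub_const 1).const_mul c
      have hb : HasDerivAt (fun t => g t - 1) (g' x) x := (hg x hx).sub_const 1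
      exact ha.mul hb
    have := ((h1.add h2).sub_const 1).add h3
    exact this.congr_deriv (by ring)
  have hFzero : HasDerivAt (fun t => t ^ 2 + (g t) ^ 2 - 1 + c * (t - 1) * (g t - 1))
      (0 : ℝ) x := by
    have heq : (fun t => t ^ 2 + (g t) ^ 2 - 1 + c * (t - 1) * (g t - 1)) =ᶠ[nhds x]
        (fun _ => (0 : ℝ)) := by
      filter_upwards [isOpen_Ioo.mem_nhds hx] with t ht
      exact hcurve t ht
    exact (hasDerivAt_const x (0 : ℝ)).congr_of_eventuallyEq heq
  have hD : 2 * x + 2 * g x * g' x + (c * (g x - 1) + c * (x - 1) * g' x) = 0 :=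
    hF.unique hFzero
  -- show 2 * g x + c * (x - 1) ≠ 0
  have hne : 2 * g x + c * (x - 1) ≠ 0 := by
    intro h0
    -- from h0 and hcv : x^2 = (g x - 1)^2
    have hsq : (x - (1 - g x)) * (x + (1 - g x)) = 0 := by nlinarith [hcv, h0]
    rcases mul_eq_zero.1 hsq with h | h
    · -- g x = 1 - x
      nlinarith
    · -- g x = x + 1
      nlinarith
  have key : (g' x * (1 - x) * (x - g x + 1) + (1 - g x) * (g x - x + 1)) *
      (2 * g x + c * (x - 1)) = 0 := by
    linear_combination (1 - x) * (x - g x + 1) * hD + 2 * (x - g x) * hcv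
  exact (mul_eq_zero.1 key).resolve_right hne
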